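/- Let σ₁, σ₃ be positive Borel measures on ℝⁿ, let Q₀ be a dyadic cube, let f₁ ∈ L^{p₁}(dσ₁) and f₃ be nonnegative and supported in Q₀, and let F₁, F₃ be the collections of principal cubes for (f₁,σ₁) and (f₃,σ₃) respectively. Then ∑_{H ∈ F₃} ∑_{H' ∈ ch¹_{F₃}(H)} (⨍_{H'} f₁ dσ₁)^{p₁} σ₁(H') ≤ ∑_{F ∈ F₁} (2 ⨍_F f₁ dσ₁)^{p₁} σ₁(F), where ch¹_{F₃}(H) := { H' ∈ ch_{F₃}(H) : π_{F₃}(π_{F₁}(H')) = H }. -/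

import Mathlib

open MeasureTheory ENNReal Set
open scoped BigOperators NNReal

noncomputable section

/-- Points of `ℝⁿ`, realized as functions `Fin n → ℝ`. -/
abbrev RN (n : ℕ) := Fin n → ℝ

/-- A dyadic cube `Q = 2^{-k}(m + [0,1)^n)` in `ℝⁿ`, recorded by its generation `k`
and lower-left corner `m`. -/
structure DyadicCube (n : ℕ) where
  k : ℤ
  m : Fin n → ℤ

namespace DyadicCube

variable {n : ℕ}

/-- The set of points of the dyadic cube `2^{-k}(m + [0,1)^n)`. -/
def carrier (Q : DyadicCube n) : Set (RN n) :=
  {x | ∀ i, (Q.m i : ℝ) * 2 ^ (-Q.k) ≤ x i ∧ x i < ((Q.m i : ℝ) + 1) * 2 ^ (-Q.k)}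

instance : Countable (DyadicCube n) := by
  have h : Function.Injective fun Q : DyadicCube n => (Q.k, Q.m) := by
    intro a b hab
    cases a; cases b
    simp only [Prod.mk.injEq] at hab
    simp [hab.1, hab.2]
  exact h.countable

/-- The indicator function `1_Q` of a dyadic cube, with values in `ℝ≥0∞`. -/
def indFun (Q : DyadicCube n) : RN n → ℝ≥0∞ :=
  Q.carrier.indicator 1

/-- The dual exponent `p' = p/(p-1)`. -/
def dual (p : ℝ) : ℝ := p / (p - 1)

open Classical in
/-- The kernel `K(Q,μ)` given by `K(Q,μ)(Q') = K(Q') μ(Q')` for `Q' ⊆ Q` and `0` otherwise. -/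
def KQ (K : DyadicCube n → ℝ≥0∞) (μ : Measure (RN n)) (Q : DyadicCube n) :
    DyadicCube n → ℝ≥0∞ :=
  fun Q' => if Q'.carrier ⊆ Q.carrier then K Q' * μ Q'.carrier else 0

open Classical in
/-- The function `∑_{Q' ⊆ Q} K(Q') μ(Q') 1_{Q'}(x)`. -/
def kernelSum (K : DyadicCube n → ℝ≥0∞) (μ : Measure (RN n)) (Q : DyadicCube n)
    (x : RN n) : ℝ≥0∞ :=
  ∑' Q' : DyadicCube n,
    (if Q'.carrier ⊆ Q.carrier then K Q' * μ Q'.carrier else 0) * indFun Q' x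

open Classical in
/-- The function `K̄_μ(Q)(x) = μ(Q)⁻¹ ∑_{Q' ⊆ Q} K(Q') μ(Q') 1_{Q'}(x)`, interpreted as `0`
when `μ(Q) = 0`. -/
def kbar (K : DyadicCube n → ℝ≥0∞) (μ : Measure (RN n)) (Q : DyadicCube n)
    (x : RN n) : ℝ≥0∞ :=
  if μ Q.carrier = 0 then 0 else (μ Q.carrier)⁻¹ * kernelSum K μ Q x

/-- The discrete Wolff potential
`W^p_{K,μ}[ν](x) = ∑_Q K(Q) μ(Q) (∫_Q K̄_μ(Q) dν)^{p-1} 1_Q(x)`. -/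
def wolff (K : DyadicCube n → ℝ≥0∞) (μ ν : Measure (RN n)) (p : ℝ) (x : RN n) : ℝ≥0∞ :=
  ∑' Q : DyadicCube n,
    K Q * μ Q.carrier * (∫⁻ y in Q.carrier, kbar K μ Q y ∂ν) ^ (p - 1) * indFun Q x

/-- The average `⨍_Q f dμ = μ(Q)⁻¹ ∫_Q f dμ` (in `ℝ≥0∞`; it is `0` when `μ(Q) = 0`). -/
def avg (σ : Measure (RN n)) (f : RN n → ℝ) (Q : DyadicCube n) : ℝ≥0∞ :=
  (σ Q.carrier)⁻¹ * ∫⁻ x in Q.carrier, ENNReal.ofReal (f x) ∂σ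

/-- The dyadic Hardy–Littlewood maximal operator
`M_σ f(x) = sup_{Q ∋ x} ⨍_Q |f| dσ`. -/
def dyadicMaximal (σ : Measure (RN n)) (f : RN n → ℝ) (x : RN n) : ℝ≥0∞ :=
  ⨆ (Q : DyadicCube n) (_ : x ∈ Q.carrier), avg σ (fun y => |f y|) Q

/-- `ch_F(F)`: the maximal dyadic cubes `Q ⊆ F` with `⨍_Q f dσ > 2 ⨍_F f dσ`. -/
def chPrin (σ : Measure (RN n)) (f : RN n → ℝ) (F : DyadicCube n) : Set (DyadicCube n) :=
  {Q | Q.carrier ⊆ F.carrier ∧ 2 * avg σ f F < avg σ f Q ∧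
    ∀ R : DyadicCube n, R.carrier ⊆ F.carrier → Q.carrier ⊆ R.carrier →
      2 * avg σ f F < avg σ f R → R = Q}

/-- The generations `F^k` of principal cubes for the pair `(f, σ)` starting from `Q₀`. -/
def prinLevel (σ : Measure (RN n)) (f : RN n → ℝ) (Q₀ : DyadicCube n) :
    ℕ → Set (DyadicCube n)
  | 0 => {Q₀}
  | k + 1 => ⋃ F ∈ prinLevel σ f Q₀ k, chPrin σ f F

/-- The collection `F = ⋃_k F^k` of principal cubes for the pair `(f, σ)`. -/
def principal (σ : Measure (RN n)) (f : RN n → ℝ) (Q₀ : DyadicCube n) :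
    Set (DyadicCube n) :=
  ⋃ k, prinLevel σ f Q₀ k

/-- `F` is the stopping parent `π_F(Q)` of `Q`: the minimal principal cube containing `Q`. -/
def IsStoppingParent (σ : Measure (RN n)) (f : RN n → ℝ) (Q₀ Q F : DyadicCube n) : Prop :=
  F ∈ principal σ f Q₀ ∧ Q.carrier ⊆ F.carrier ∧
    ∀ F' ∈ principal σ f Q₀, Q.carrier ⊆ F'.carrier → F.carrier ⊆ F'.carrier

open Classical in
/-- The stopping parent `π_F(Q)`, the minimal principal cube containing `Q`
(junk value `Q₀` if there is none). -/
def stoppingParent (σ : Measure (RN n)) (f : RN n → ℝ) (Q₀ Q : DyadicCube n) :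
    DyadicCube n :=
  if h : ∃ F, IsStoppingParent σ f Q₀ Q F then h.choose else Q₀

/-- The set `E_F(F) = F \ ⋃_{F' ∈ ch_F(F)} F'`. -/
def ESet (σ : Measure (RN n)) (f : RN n → ℝ) (F : DyadicCube n) : Set (RN n) :=
  F.carrier \ ⋃ F' ∈ chPrin σ f F, F'.carrier

/-- `ch^i_{F₃}(H) = {H' ∈ ch_{F₃}(H) : π_{F₃}(π_{F_i}(H')) = H}`. -/
def chStop (σi σ₃ : Measure (RN n)) (fi f₃ : RN n → ℝ) (Q₀ H : DyadicCube n) :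
    Set (DyadicCube n) :=
  {H' | H' ∈ chPrin σ₃ f₃ H ∧
    stoppingParent σ₃ f₃ Q₀ (stoppingParent σi fi Q₀ H') = H}

/-- The modified function
`f_i^H = f_i 1_{E_{F₃}(H)} + ∑_{H' ∈ ch^i_{F₃}(H)} (⨍_{H'} f_i dσ_i) 1_{H'}`. -/
def modFun (σi σ₃ : Measure (RN n)) (fi f₃ : RN n → ℝ) (Q₀ H : DyadicCube n)
    (x : RN n) : ℝ≥0∞ :=
  (ESet σ₃ f₃ H).indicator (fun y => ENNReal.ofReal (fi y)) x +
    ∑' H' : chStop σi σ₃ fi f₃ Q₀ H,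
      (H'.1.carrier.indicator (fun _ => avg σi fi H'.1) x)

/-- The bilinear embedding inequality
`∑_Q K(Q) |∫_Q f₁ dσ₁| |∫_Q f₂ dσ₂| ≤ c ‖f₁‖_{L^{p₁}(σ₁)} ‖f₂‖_{L^{p₂}(σ₂)}`. -/
def bilinearEmbedding (K : DyadicCube n → ℝ≥0∞) (σ₁ σ₂ : Measure (RN n))
    (p₁ p₂ : ℝ) (c : ℝ≥0∞) : Prop :=
  ∀ f₁ f₂ : RN n → ℝ,
    MemLp f₁ (ENNReal.ofReal p₁) σ₁ → MemLp f₂ (ENNReal.ofReal p₂) σ₂ →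
    (∑' Q : DyadicCube n,
        K Q * ENNReal.ofReal |∫ x in Q.carrier, f₁ x ∂σ₁| *
          ENNReal.ofReal |∫ x in Q.carrier, f₂ x ∂σ₂|) ≤
      c * eLpNorm f₁ (ENNReal.ofReal p₁) σ₁ * eLpNorm f₂ (ENNReal.ofReal p₂) σ₂

/-- The trilinear embedding inequality
`∑_Q K(Q) ∏_i |∫_Q f_i dσ_i| ≤ c ∏_i ‖f_i‖_{L^{p_i}(σ_i)}`. -/
def trilinearEmbedding (K : DyadicCube n → ℝ≥0∞) (σ : Fin 3 → Measure (RN n))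
    (p : Fin 3 → ℝ) (c : ℝ≥0∞) : Prop :=
  ∀ f : (i : Fin 3) → RN n → ℝ,
    (∀ i, MemLp (f i) (ENNReal.ofReal (p i)) (σ i)) →
    (∑' Q : DyadicCube n,
        K Q * ∏ i : Fin 3, ENNReal.ofReal |∫ x in Q.carrier, f i x ∂(σ i)|) ≤
      c * ∏ i : Fin 3, eLpNorm (f i) (ENNReal.ofReal (p i)) (σ i)

/-- Sawyer's checking condition for the pair `(σ₁, σ₂)`, with the finiteness clauses. -/
def sawyerTest (K : DyadicCube n → ℝ≥0∞) (σ₁ σ₂ : Measure (RN n))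
    (p₁ p₂ : ℝ) (c : ℝ≥0∞) : Prop :=
  ∀ Q : DyadicCube n,
    ((∫⁻ x in Q.carrier, kernelSum K σ₁ Q x ^ dual p₂ ∂σ₂) ^ (1 / dual p₂) ≤
        c * σ₁ Q.carrier ^ (1 / p₁) ∧ c * σ₁ Q.carrier ^ (1 / p₁) < ⊤) ∧
    ((∫⁻ x in Q.carrier, kernelSum K σ₂ Q x ^ dual p₁ ∂σ₁) ^ (1 / dual p₁) ≤
        c * σ₂ Q.carrier ^ (1 / p₂) ∧ c * σ₂ Q.carrier ^ (1 / p₂) < ⊤)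

/-- The Wolff-potential checking condition for the pair `(σ₁, σ₂)`:
`‖W^{p₂'}_{K,σ₂}[σ₁]^{1/p₂'}‖_{L^r(σ₁)} ≤ c` and `‖W^{p₁'}_{K,σ₁}[σ₂]^{1/p₁'}‖_{L^r(σ₂)} ≤ c`. -/
def wolffTest (K : DyadicCube n → ℝ≥0∞) (σ₁ σ₂ : Measure (RN n))
    (p₁ p₂ r : ℝ) (c : ℝ≥0∞) : Prop :=
  (∫⁻ x, (wolff K σ₂ σ₁ (dual p₂) x ^ (1 / dual p₂)) ^ r ∂σ₁) ^ (1 / r) ≤ c ∧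
  (∫⁻ x, (wolff K σ₁ σ₂ (dual p₁) x ^ (1 / dual p₁)) ^ r ∂σ₂) ^ (1 / r) ≤ c

/-- Condition (b) of the trilinear embedding theorem, without the finiteness clauses. -/
def trilinearTestLe (K : DyadicCube n → ℝ≥0∞) (σ : Fin 3 → Measure (RN n))
    (p : Fin 3 → ℝ) (c : ℝ≥0∞) : Prop :=
  ∀ e : Equiv.Perm (Fin 3),
    (1 ≤ 1 / p (e 0) + 1 / p (e 1) → ∀ Q : DyadicCube n,
      (∫⁻ x in Q.carrier,
          kernelSum (KQ K (σ (e 2)) Q) (σ (e 0)) Q x ^ dual (p (e 1)) ∂(σ (e 1))) ^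
            (1 / dual (p (e 1))) ≤
        c * σ (e 0) Q.carrier ^ (1 / p (e 0)) * σ (e 2) Q.carrier ^ (1 / p (e 2)) ∧
      (∫⁻ x in Q.carrier,
          kernelSum (KQ K (σ (e 2)) Q) (σ (e 1)) Q x ^ dual (p (e 0)) ∂(σ (e 0))) ^
            (1 / dual (p (e 0))) ≤
        c * σ (e 1) Q.carrier ^ (1 / p (e 1)) * σ (e 2) Q.carrier ^ (1 / p (e 2))) ∧
    (1 / p (e 0) + 1 / p (e 1) < 1 → ∀ Q : DyadicCube n, ∀ r : ℝ,
      1 / r + 1 / p (e 0) + 1 / p (e 1) = 1 →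
      (∫⁻ x, (wolff (KQ K (σ (e 2)) Q) (σ (e 1)) (σ (e 0)) (dual (p (e 1))) x ^
          (1 / dual (p (e 1)))) ^ r ∂(σ (e 0))) ^ (1 / r) ≤
        c * σ (e 2) Q.carrier ^ (1 / p (e 2)) ∧
      (∫⁻ x, (wolff (KQ K (σ (e 2)) Q) (σ (e 0)) (σ (e 1)) (dual (p (e 0))) x ^
          (1 / dual (p (e 0)))) ^ r ∂(σ (e 1))) ^ (1 / r) ≤
        c * σ (e 2) Q.carrier ^ (1 / p (e 2)))

/-- Condition (b) of the trilinear embedding theorem, with the finiteness clauses. -/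
def trilinearTest (K : DyadicCube n → ℝ≥0∞) (σ : Fin 3 → Measure (RN n))
    (p : Fin 3 → ℝ) (c : ℝ≥0∞) : Prop :=
  trilinearTestLe K σ p c ∧
  ∀ e : Equiv.Perm (Fin 3),
    (1 ≤ 1 / p (e 0) + 1 / p (e 1) → ∀ Q : DyadicCube n,
      c * σ (e 0) Q.carrier ^ (1 / p (e 0)) * σ (e 2) Q.carrier ^ (1 / p (e 2)) < ⊤ ∧
      c * σ (e 1) Q.carrier ^ (1 / p (e 1)) * σ (e 2) Q.carrier ^ (1 / p (e 2)) < ⊤) ∧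
    (1 / p (e 0) + 1 / p (e 1) < 1 → ∀ Q : DyadicCube n,
      c * σ (e 2) Q.carrier ^ (1 / p (e 2)) < ⊤)

end DyadicCube

namespace DyadicCube
variable {n : ℕ}

/-- corner point -/
def corner (Q : DyadicCube n) : RN n := fun i => (Q.m i : ℝ) * 2 ^ (-Q.k)

lemma corner_mem (Q : DyadicCube n) : Q.corner ∈ Q.carrier := by
  intro i
  refine ⟨le_refl _, ?_⟩
  have h : (0:ℝ) < 2 ^ (-Q.k) := by positivity
  have : (Q.m i : ℝ) < (Q.m i : ℝ) + 1 := by linarith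
  exact mul_lt_mul_of_pos_right this h

lemma scalar_subset {k k' m m' : ℤ} (hk : k ≤ k') {x y : ℝ}
    (hx1 : (m':ℝ) * 2 ^ (-k') ≤ x) (hx2 : x < ((m':ℝ) + 1) * 2 ^ (-k'))
    (hx3 : (m:ℝ) * 2 ^ (-k) ≤ x) (hx4 : x < ((m:ℝ) + 1) * 2 ^ (-k))
    (hy1 : (m':ℝ) * 2 ^ (-k') ≤ y) (hy2 : y < ((m':ℝ) + 1) * 2 ^ (-k')) :
    (m:ℝ) * 2 ^ (-k) ≤ y ∧ y < ((m:ℝ) + 1) * 2 ^ (-k) := by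
  have hpos' : (0:ℝ) < 2 ^ (-k') := by positivity
  set d : ℕ := (k' - k).toNat with hd
  have hdk : (d:ℤ) = k' - k := Int.toNat_of_nonneg (by omega)
  have hD : (2:ℝ) ^ (k' - k) = ((2 ^ d : ℤ) : ℝ) := by
    push_cast
    rw [← zpow_natCast (2:ℝ) d, hdk]
  have hsplit : (2:ℝ) ^ (-k) = 2 ^ (k' - k) * 2 ^ (-k') := by
    rw [← zpow_add₀ (two_ne_zero)]
    congr 1
    ring
  have c1 : m * 2 ^ d ≤ m' := by
    have h1 : (m:ℝ) * 2 ^ (-k) < ((m':ℝ) + 1) * 2 ^ (-k') := lt_of_le_of_lt hx3 hx2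
    rw [hsplit, ← mul_assoc] at h1
    have h2 : (m:ℝ) * 2 ^ (k' - k) < (m':ℝ) + 1 := lt_of_mul_lt_mul_right h1 hpos'.le
    rw [hD] at h2
    have h3 : (m * 2 ^ d : ℤ) < m' + 1 := by exact_mod_cast h2
    omega
  have c2 : m' + 1 ≤ (m + 1) * 2 ^ d := by
    have h1 : (m':ℝ) * 2 ^ (-k') < ((m:ℝ) + 1) * 2 ^ (-k) := lt_of_le_of_lt hx1 hx4
    rw [hsplit, ← mul_assoc] at h1
    have h2 : (m':ℝ) < ((m:ℝ) + 1) * 2 ^ (k' - k) := lt_of_mul_lt_mul_right h1 hpos'.le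
    rw [hD] at h2
    have h3 : (m' : ℤ) < (m + 1) * 2 ^ d := by exact_mod_cast h2
    omega
  have e1 : (m:ℝ) * 2 ^ (-k) ≤ (m':ℝ) * 2 ^ (-k') := by
    rw [hsplit, ← mul_assoc, hD]
    have : ((m * 2 ^ d : ℤ) : ℝ) ≤ ((m' : ℤ) : ℝ) := by exact_mod_cast c1
    push_cast at this ⊢
    exact mul_le_mul_of_nonneg_right this (le_of_lt hpos')
  have e2 : ((m':ℝ) + 1) * 2 ^ (-k') ≤ ((m:ℝ) + 1) * 2 ^ (-k) := by
    rw [hsplit, ← mul_assoc, hD]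
    have : ((m' + 1 : ℤ) : ℝ) ≤ (((m + 1) * 2 ^ d : ℤ) : ℝ) := by exact_mod_cast c2
    push_cast at this ⊢
    exact mul_le_mul_of_nonneg_right this (le_of_lt hpos')
  exact ⟨le_trans e1 hy1, lt_of_lt_of_le hy2 e2⟩

lemma carrier_subset_of_k_le {P Q : DyadicCube n} (hk : Q.k ≤ P.k)
    (h : (P.carrier ∩ Q.carrier).Nonempty) : P.carrier ⊆ Q.carrier := by
  obtain ⟨x, hxP, hxQ⟩ := h
  intro y hy i
  exact scalar_subset hk (hxP i).1 (hxP i).2 (hxQ i).1 (hxQ i).2 (hy i).1 (hy i).2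

lemma nested_or_disjoint {P Q : DyadicCube n} (h : (P.carrier ∩ Q.carrier).Nonempty) :
    P.carrier ⊆ Q.carrier ∨ Q.carrier ⊆ P.carrier := by
  rcases le_total Q.k P.k with hk | hk
  · exact Or.inl (carrier_subset_of_k_le hk h)
  · exact Or.inr (carrier_subset_of_k_le hk ⟨h.choose, h.choose_spec.2, h.choose_spec.1⟩)

lemma interval_subset_of_carrier_subset {P Q : DyadicCube n}
    (h : P.carrier ⊆ Q.carrier) (i : Fin n) :
    Set.Ico ((P.m i : ℝ) * 2 ^ (-P.k)) (((P.m i : ℝ) + 1) * 2 ^ (-P.k)) ⊆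
      Set.Ico ((Q.m i : ℝ) * 2 ^ (-Q.k)) (((Q.m i : ℝ) + 1) * 2 ^ (-Q.k)) := by
  intro t ht
  classical
  set x : RN n := fun j => if j = i then t else (P.m j : ℝ) * 2 ^ (-P.k) with hxdef
  have hxP : x ∈ P.carrier := by
    intro j
    by_cases hj : j = i
    · subst hj
      simp only [hxdef, if_pos rfl]
      exact ⟨ht.1, ht.2⟩
    · simp only [hxdef, if_neg hj]
      exact (corner_mem P) j
  have hxQ := h hxP i
  simpa only [hxdef, if_pos rfl, Set.mem_Ico] using hxQ

lemma carrier_interval_nonempty (Q : DyadicCube n) (i : Fin n) :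
    (Q.m i : ℝ) * 2 ^ (-Q.k) < ((Q.m i : ℝ) + 1) * 2 ^ (-Q.k) := by
  have h : (0:ℝ) < 2 ^ (-Q.k) := by positivity
  have : (Q.m i : ℝ) < (Q.m i : ℝ) + 1 := by linarith
  exact mul_lt_mul_of_pos_right this h

lemma eq_of_carrier_eq (hn : n ≠ 0) {P Q : DyadicCube n}
    (h : P.carrier = Q.carrier) : P = Q := by
  have hiv : ∀ i : Fin n,
      (P.m i : ℝ) * 2 ^ (-P.k) = (Q.m i : ℝ) * 2 ^ (-Q.k) ∧
      ((P.m i : ℝ) + 1) * 2 ^ (-P.k) = ((Q.m i : ℝ) + 1) * 2 ^ (-Q.k) := by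
    intro i
    have h1 := interval_subset_of_carrier_subset h.subset i
    have h2 := interval_subset_of_carrier_subset h.superset i
    have := (Set.Ico_eq_Ico_iff (Or.inl (carrier_interval_nonempty P i))).mp
      (subset_antisymm h1 h2)
    exact this
  have i0 : Fin n := ⟨0, Nat.pos_of_ne_zero hn⟩
  have hk : P.k = Q.k := by
    have h1 := (hiv i0).1
    have h2 := (hiv i0).2
    have h3 : (2:ℝ) ^ (-P.k) = 2 ^ (-Q.k) := by nlinarith [h1, h2]
    have := zpow_right_injective₀ (by norm_num : (0:ℝ) < 2) (by norm_num : (2:ℝ) ≠ 1) h3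
    omega
  have hm : P.m = Q.m := by
    funext i
    have h1 := (hiv i).1
    rw [hk] at h1
    have hp : (0:ℝ) < 2 ^ (-Q.k) := by positivity
    have : (P.m i : ℝ) = (Q.m i : ℝ) := mul_right_cancel₀ (ne_of_gt hp) h1
    exact_mod_cast this
  cases P; cases Q
  simp only at hk hm
  simp [hk, hm]

lemma k_le_of_carrier_subset (hn : n ≠ 0) {P Q : DyadicCube n}
    (h : P.carrier ⊆ Q.carrier) : Q.k ≤ P.k := by
  by_contra hc
  push_neg at hc
  have h2 : Q.carrier ⊆ P.carrier :=
    carrier_subset_of_k_le (le_of_lt hc) ⟨P.corner, h (corner_mem P), (corner_mem P)⟩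
  have := eq_of_carrier_eq hn (subset_antisymm h h2)
  rw [this] at hc
  exact lt_irrefl _ hc

lemma measurableSet_carrier (Q : DyadicCube n) : MeasurableSet Q.carrier := by
  have : Q.carrier = ⋂ i, (fun x : RN n => x i) ⁻¹'
      Set.Ico ((Q.m i : ℝ) * 2 ^ (-Q.k)) (((Q.m i : ℝ) + 1) * 2 ^ (-Q.k)) := by
    ext x
    simp [carrier, Set.mem_iInter, Set.mem_Ico]
  rw [this]
  exact MeasurableSet.iInter fun i => (measurable_pi_apply i) measurableSet_Ico


lemma avg_congr (σ : Measure (RN n)) (f : RN n → ℝ) {P Q : DyadicCube n}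
    (h : P.carrier = Q.carrier) : avg σ f P = avg σ f Q := by
  unfold avg; rw [h]

lemma not_two_mul_avg_lt_self (σ : Measure (RN n)) (f : RN n → ℝ) (Q : DyadicCube n) :
    ¬ 2 * avg σ f Q < avg σ f Q :=
  not_lt.2 (le_mul_of_one_le_left zero_le one_le_two)

lemma mem_principal_of_level {σ : Measure (RN n)} {f : RN n → ℝ} {Q₀ Q : DyadicCube n} {k : ℕ}
    (h : Q ∈ prinLevel σ f Q₀ k) : Q ∈ principal σ f Q₀ := Set.mem_iUnion.2 ⟨k, h⟩

lemma base_mem_principal (σ : Measure (RN n)) (f : RN n → ℝ) (Q₀ : DyadicCube n) :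
    Q₀ ∈ principal σ f Q₀ :=
  mem_principal_of_level (k := 0) (by simp [prinLevel])

lemma child_mem_principal {σ : Measure (RN n)} {f : RN n → ℝ} {Q₀ F Q : DyadicCube n}
    (hF : F ∈ principal σ f Q₀) (hQ : Q ∈ chPrin σ f F) : Q ∈ principal σ f Q₀ := by
  obtain ⟨k, hk⟩ := Set.mem_iUnion.1 hF
  refine mem_principal_of_level (k := k + 1) ?_
  show Q ∈ ⋃ F ∈ prinLevel σ f Q₀ k, chPrin σ f F
  exact Set.mem_iUnion₂.2 ⟨F, hk, hQ⟩

lemma carrier_subset_base {σ : Measure (RN n)} {f : RN n → ℝ} {Q₀ F : DyadicCube n}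
    (hF : F ∈ principal σ f Q₀) : F.carrier ⊆ Q₀.carrier := by
  obtain ⟨k, hk⟩ := Set.mem_iUnion.1 hF
  clear hF
  induction k generalizing F with
  | zero =>
    have : F = Q₀ := by simpa [prinLevel] using hk
    rw [this]
  | succ k ih =>
    obtain ⟨G, hG, hFG⟩ := Set.mem_iUnion₂.1 (show F ∈ ⋃ G ∈ prinLevel σ f Q₀ k, chPrin σ f G from hk)
    exact hFG.1.trans (ih hG)

lemma exists_isStoppingParent (hn : n ≠ 0) {σ : Measure (RN n)} {f : RN n → ℝ}
    {Q₀ Q : DyadicCube n} (hQ : Q.carrier ⊆ Q₀.carrier) :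
    ∃ F, IsStoppingParent σ f Q₀ Q F := by
  have hinh : ∃ z : ℤ, ∃ F, F ∈ principal σ f Q₀ ∧ Q.carrier ⊆ F.carrier ∧ F.k = z :=
    ⟨Q₀.k, Q₀, base_mem_principal σ f Q₀, hQ, rfl⟩
  have hbdd : ∃ b : ℤ, ∀ z, (∃ F, F ∈ principal σ f Q₀ ∧ Q.carrier ⊆ F.carrier ∧ F.k = z) → z ≤ b := by
    refine ⟨Q.k, ?_⟩
    rintro z ⟨F, _, hsub, hk⟩
    exact hk ▸ k_le_of_carrier_subset hn hsub
  obtain ⟨ub, ⟨F, hFmem, hFsub, hFk⟩, hub⟩ := Int.exists_greatest_of_bdd hbdd hinh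
  refine ⟨F, hFmem, hFsub, fun F' hF' hsub' => ?_⟩
  have hk' : F'.k ≤ F.k := hFk ▸ hub F'.k ⟨F', hF', hsub', rfl⟩
  exact carrier_subset_of_k_le hk' ⟨Q.corner, hFsub (corner_mem Q), hsub' (corner_mem Q)⟩

lemma stoppingParent_spec (hn : n ≠ 0) {σ : Measure (RN n)} {f : RN n → ℝ}
    {Q₀ Q : DyadicCube n} (hQ : Q.carrier ⊆ Q₀.carrier) :
    IsStoppingParent σ f Q₀ Q (stoppingParent σ f Q₀ Q) := by
  have h := exists_isStoppingParent (σ := σ) (f := f) hn hQ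
  rw [stoppingParent, dif_pos h]
  exact h.choose_spec

lemma avg_le_two_mul_stoppingParent (hn : n ≠ 0) {σ : Measure (RN n)} {f : RN n → ℝ}
    {Q₀ Q : DyadicCube n} (hQ : Q.carrier ⊆ Q₀.carrier) :
    avg σ f Q ≤ 2 * avg σ f (stoppingParent σ f Q₀ Q) := by
  obtain ⟨hFmem, hQF, hmin⟩ := stoppingParent_spec (σ := σ) (f := f) hn hQ
  set F := stoppingParent σ f Q₀ Q with hF
  by_contra hc
  push_neg at hc
  have hinh : ∃ z : ℤ, ∃ R : DyadicCube n, R.carrier ⊆ F.carrier ∧ Q.carrier ⊆ R.carrier ∧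
      2 * avg σ f F < avg σ f R ∧ R.k = z := ⟨Q.k, Q, hQF, subset_rfl, hc, rfl⟩
  have hbdd : ∃ b : ℤ, ∀ z, (∃ R : DyadicCube n, R.carrier ⊆ F.carrier ∧ Q.carrier ⊆ R.carrier ∧
      2 * avg σ f F < avg σ f R ∧ R.k = z) → b ≤ z := by
    refine ⟨F.k, ?_⟩
    rintro z ⟨R, hR1, -, -, hk⟩
    exact hk ▸ k_le_of_carrier_subset hn hR1
  obtain ⟨lb, ⟨R₀, hR1, hR2, hR3, hRk⟩, hlb⟩ := Int.exists_least_of_bdd hbdd hinh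
  have hmax : R₀ ∈ chPrin σ f F := by
    refine ⟨hR1, hR3, fun R hRF hR₀R hcond => ?_⟩
    have hkk : R₀.k ≤ R.k := hRk ▸ hlb R.k ⟨R, hRF, hR2.trans hR₀R, hcond, rfl⟩
    have hsub : R.carrier ⊆ R₀.carrier :=
      carrier_subset_of_k_le hkk ⟨R₀.corner, hR₀R (corner_mem R₀), corner_mem R₀⟩
    exact eq_of_carrier_eq hn (subset_antisymm hsub hR₀R)
  have hR₀mem : R₀ ∈ principal σ f Q₀ := child_mem_principal hFmem hmax
  have hcarrier : R₀.carrier = F.carrier := subset_antisymm hR1 (hmin R₀ hR₀mem hR2)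
  rw [avg_congr σ f hcarrier] at hR3
  exact not_two_mul_avg_lt_self σ f F hR3

lemma chPrin_disjoint {σ : Measure (RN n)} {f : RN n → ℝ} {H A B : DyadicCube n}
    (hA : A ∈ chPrin σ f H) (hB : B ∈ chPrin σ f H) (hAB : A ≠ B) :
    Disjoint A.carrier B.carrier := by
  by_contra hdis
  rw [Set.not_disjoint_iff_nonempty_inter] at hdis
  rcases nested_or_disjoint hdis with h | h
  · exact hAB (hA.2.2 B hB.1 h hB.2.1).symm
  · exact hAB (hB.2.2 A hA.1 h hA.2.1)

lemma chPrin_eq_empty (hn : n = 0) (σ : Measure (RN n)) (f : RN n → ℝ) (H : DyadicCube n) :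
    chPrin σ f H = ∅ := by
  ext Q
  simp only [chPrin, Set.mem_setOf_eq, Set.mem_empty_iff_false, iff_false, not_and]
  intro h1 h2
  exfalso
  have hcar : Q.carrier = H.carrier := by
    subst hn
    ext x
    constructor <;> intro _ i <;> exact i.elim0
  rw [avg_congr σ f hcar] at h2
  exact not_two_mul_avg_lt_self σ f H h2

end DyadicCube

open DyadicCube
/-- Reorganizing the double sum over `H ∈ F₃` and `H' ∈ ch¹_{F₃}(H)`:
`∑_{H ∈ F₃} ∑_{H' ∈ ch¹_{F₃}(H)} (⨍_{H'} f₁ dσ₁)^{p₁} σ₁(H') ≤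
∑_{F ∈ F₁} (2 ⨍_F f₁ dσ₁)^{p₁} σ₁(F)`. -/
theorem double_sum_children_le (n : ℕ) (p₁ : ℝ) (hp₁ : 1 < p₁)
    (σ₁ σ₃ : Measure (RN n)) (Q₀ : DyadicCube n) (f₁ f₃ : RN n → ℝ)
    (hf₁ : MemLp f₁ (ENNReal.ofReal p₁) σ₁) (hf₁0 : ∀ x, 0 ≤ f₁ x)
    (hsupp₁ : Function.support f₁ ⊆ Q₀.carrier)
    (hf₃0 : ∀ x, 0 ≤ f₃ x) (hsupp₃ : Function.support f₃ ⊆ Q₀.carrier) :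
    ∑' H : principal σ₃ f₃ Q₀, ∑' H' : chStop σ₁ σ₃ f₁ f₃ Q₀ H.1,
        avg σ₁ f₁ H'.1 ^ p₁ * σ₁ H'.1.carrier ≤
      ∑' F : principal σ₁ f₁ Q₀, (2 * avg σ₁ f₁ F.1) ^ p₁ * σ₁ F.1.carrier := by
  classical
  have hp₁0 : (0:ℝ) ≤ p₁ := le_of_lt (lt_trans one_pos hp₁)
  by_cases hn : n = 0
  · have hzero : ∀ H : principal σ₃ f₃ Q₀,
        ∑' H' : chStop σ₁ σ₃ f₁ f₃ Q₀ H.1, (avg σ₁ f₁ H'.1 ^ p₁ * σ₁ H'.1.carrier) = 0 := by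
      intro H
      have he : IsEmpty (chStop σ₁ σ₃ f₁ f₃ Q₀ H.1 : Set (DyadicCube n)) := by
        rw [Set.isEmpty_coe_sort]
        ext Q
        simp only [chStop, Set.mem_setOf_eq, Set.mem_empty_iff_false, iff_false, not_and]
        intro hQ
        rw [chPrin_eq_empty hn σ₃ f₃ H.1] at hQ
        exact absurd hQ (Set.notMem_empty Q)
      exact ENNReal.tsum_eq_zero.2 fun i => (he.false i).elim
    calc (∑' H : principal σ₃ f₃ Q₀, ∑' H' : chStop σ₁ σ₃ f₁ f₃ Q₀ H.1,
          avg σ₁ f₁ H'.1 ^ p₁ * σ₁ H'.1.carrier)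
        = ∑' _H : principal σ₃ f₃ Q₀, (0 : ℝ≥0∞) := tsum_congr hzero
      _ = 0 := tsum_zero
      _ ≤ _ := zero_le
  · have hsub : ∀ (H : principal σ₃ f₃ Q₀) (H' : chStop σ₁ σ₃ f₁ f₃ Q₀ H.1),
        H'.1.carrier ⊆ Q₀.carrier := fun H H' =>
      H'.2.1.1.trans (carrier_subset_base H.2)
    have hφspec : ∀ p : Σ H : principal σ₃ f₃ Q₀, chStop σ₁ σ₃ f₁ f₃ Q₀ H.1,
        IsStoppingParent σ₁ f₁ Q₀ p.2.1 (stoppingParent σ₁ f₁ Q₀ p.2.1) :=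
      fun p => stoppingParent_spec hn (hsub p.1 p.2)
    let φ : (Σ H : principal σ₃ f₃ Q₀, chStop σ₁ σ₃ f₁ f₃ Q₀ H.1) → principal σ₁ f₁ Q₀ :=
      fun p => ⟨stoppingParent σ₁ f₁ Q₀ p.2.1, (hφspec p).1⟩
    let G : (Σ H : principal σ₃ f₃ Q₀, chStop σ₁ σ₃ f₁ f₃ Q₀ H.1) → ℝ≥0∞ :=
      fun p => avg σ₁ f₁ p.2.1 ^ p₁ * σ₁ p.2.1.carrier
    have step1 : (∑' H : principal σ₃ f₃ Q₀, ∑' H' : chStop σ₁ σ₃ f₁ f₃ Q₀ H.1,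
        avg σ₁ f₁ H'.1 ^ p₁ * σ₁ H'.1.carrier) = ∑' p, G p :=
      (ENNReal.tsum_sigma' G).symm
    have step2 : (∑' p, G p) =
        ∑' (F : principal σ₁ f₁ Q₀), ∑' (q : {p // φ p = F}), G q.1 := by
      rw [← (Equiv.sigmaFiberEquiv φ).tsum_eq G]
      exact ENNReal.tsum_sigma' _
    have hfiber : ∀ F : principal σ₁ f₁ Q₀,
        (∑' q : {p // φ p = F}, G q.1) ≤ (2 * avg σ₁ f₁ F.1) ^ p₁ * σ₁ F.1.carrier := by
      intro F
      have hparent : ∀ q : {p // φ p = F}, stoppingParent σ₁ f₁ Q₀ q.1.2.1 = F.1 :=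
        fun q => congrArg Subtype.val q.2
      have hsubF : ∀ q : {p // φ p = F}, q.1.2.1.carrier ⊆ F.1.carrier := by
        intro q
        have h := (hφspec q.1).2.1
        rwa [hparent q] at h
      have h1 : ∀ q : {p // φ p = F},
          G q.1 ≤ (2 * avg σ₁ f₁ F.1) ^ p₁ * σ₁ q.1.2.1.carrier := by
        intro q
        have havg : avg σ₁ f₁ q.1.2.1 ≤ 2 * avg σ₁ f₁ F.1 := by
          have h := avg_le_two_mul_stoppingParent (σ := σ₁) (f := f₁) hn (hsub q.1.1 q.1.2)
          rwa [hparent q] at h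
        exact mul_le_mul_left (ENNReal.rpow_le_rpow havg hp₁0) _
      have hdisj : Pairwise (Function.onFun Disjoint fun q : {p // φ p = F} => q.1.2.1.carrier) := by
        rintro ⟨⟨H₁, H₁'⟩, hq₁⟩ ⟨⟨H₂, H₂'⟩, hq₂⟩ hne
        have hp1 : stoppingParent σ₁ f₁ Q₀ H₁'.1 = F.1 := congrArg Subtype.val hq₁
        have hp2 : stoppingParent σ₁ f₁ Q₀ H₂'.1 = F.1 := congrArg Subtype.val hq₂
        have e₁ := H₁'.2.2
        have e₂ := H₂'.2.2
        rw [hp1] at e₁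
        rw [hp2] at e₂
        have hHval : H₁.1 = H₂.1 := by rw [← e₁, ← e₂]
        have hH : H₁ = H₂ := Subtype.ext hHval
        subst hH
        have hH' : H₁'.1 ≠ H₂'.1 := fun he => hne (by
          apply Subtype.ext
          exact congrArg (Sigma.mk H₁) (Subtype.ext he))
        exact chPrin_disjoint H₁'.2.1 H₂'.2.1 hH'
      calc (∑' q : {p // φ p = F}, G q.1)
          ≤ ∑' q : {p // φ p = F}, (2 * avg σ₁ f₁ F.1) ^ p₁ * σ₁ q.1.2.1.carrier :=
            Summable.tsum_le_tsum h1 ENNReal.summable ENNReal.summable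
        _ = (2 * avg σ₁ f₁ F.1) ^ p₁ * ∑' q : {p // φ p = F}, σ₁ q.1.2.1.carrier :=
            ENNReal.tsum_mul_left
        _ ≤ (2 * avg σ₁ f₁ F.1) ^ p₁ * σ₁ F.1.carrier := by
            refine mul_le_mul_right ?_ _
            rw [← measure_iUnion hdisj (fun q => measurableSet_carrier _)]
            exact measure_mono (Set.iUnion_subset hsubF)
    rw [step1, step2]
    exact Summable.tsum_le_tsum hfiber ENNReal.summable ENNReal.summable
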